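/- Hindsight advantage formulation: for any fixed goal g', ∇η(θ) = Σ_τ p(τ | g', θ) Σ_g p(g) Σ_{t=1}^{T−1} ∇ log p(a_t | s_t, g, θ) · [ ∏_{k=1}^t p(a_k | s_k, g, θ)/p(a_k | s_k, g', θ) ] · A_t^θ(s_t, a_t, g). -/

import Mathlib

open Finset

/-- A trajectory `s_1, a_1, …, s_T` with horizon `T = n + 1`. -/
abbrev Traj (S A : Type) (n : ℕ) := (Fin (n + 1) → S) × (Fin n → A)

/-- `p(τ ∣ g, θ) = p(s_1) ∏_{t=1}^{T-1} p(a_t ∣ s_t, g, θ) p(s_{t+1} ∣ s_t, a_t)`. -/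
def trajProb {S A G : Type} (n : ℕ) (init : S → ℝ) (trans : S → A → S → ℝ)
    (pol : ℝ → G → S → A → ℝ) (θ : ℝ) (g : G) (τ : Traj S A n) : ℝ :=
  init (τ.1 0) * ∏ t : Fin n,
    pol θ g (τ.1 t.castSucc) (τ.2 t) * trans (τ.1 t.castSucc) (τ.2 t) (τ.1 t.succ)

/-- The expected return `η(θ) = ∑_g p(g) ∑_τ p(τ ∣ g, θ) ∑_{t=1}^T r(s_t, g)`. -/
def expReturn {S A G : Type} [Fintype S] [Fintype A] [Fintype G] (n : ℕ)
    (init : S → ℝ) (trans : S → A → S → ℝ) (pol : ℝ → G → S → A → ℝ)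
    (pG : G → ℝ) (r : S → G → ℝ) (θ : ℝ) : ℝ :=
  ∑ g : G, pG g * ∑ τ : Traj S A n,
    trajProb n init trans pol θ g τ * ∑ t : Fin (n + 1), r (τ.1 t) g

/-- The action-value function
`Q_t^θ(s, a, g) = E[∑_{t'=t+1}^T r(S_{t'}, g) ∣ S_t = s, A_t = a, g, θ]`,
defined as a conditional expectation under the trajectory distribution. -/
noncomputable def condQ {S A G : Type} [Fintype S] [Fintype A] [DecidableEq S] [DecidableEq A]
    (n : ℕ) (init : S → ℝ) (trans : S → A → S → ℝ) (pol : ℝ → G → S → A → ℝ)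
    (r : S → G → ℝ) (θ : ℝ) (g : G) (t : Fin n) (s : S) (a : A) : ℝ :=
  (∑ τ : Traj S A n,
      if τ.1 t.castSucc = s ∧ τ.2 t = a then
        trajProb n init trans pol θ g τ *
          ∑ t' ∈ Finset.univ.filter (fun t' : Fin (n + 1) => t.castSucc < t'), r (τ.1 t') g
      else 0) /
    (∑ τ : Traj S A n,
      if τ.1 t.castSucc = s ∧ τ.2 t = a then trajProb n init trans pol θ g τ else 0)

namespace HPG

variable {S A : Type} [Fintype S] [Fintype A]

def gp (n : ℕ) (init : S → ℝ) (trans : S → A → S → ℝ)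
    (P : Fin n → S → A → ℝ) (τ : Traj S A n) : ℝ :=
  init (τ.1 0) * ∏ t : Fin n,
    P t (τ.1 t.castSucc) (τ.2 t) * trans (τ.1 t.castSucc) (τ.2 t) (τ.1 t.succ)

def pref {n m : ℕ} (h : m ≤ n) (τ : Traj S A n) : Traj S A m :=
  (fun i => τ.1 (Fin.castLE (by omega) i), fun j => τ.2 (Fin.castLE h j))

/-- The snoc equivalence for trajectories. -/
def snocT (n : ℕ) : (Traj S A n × (A × S)) ≃ Traj S A (n + 1) where
  toFun x := (Fin.snoc x.1.1 x.2.2, Fin.snoc x.1.2 x.2.1)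
  invFun τ := ((Fin.init τ.1, Fin.init τ.2), (τ.2 (Fin.last n), τ.1 (Fin.last (n + 1))))
  left_inv x := by simp
  right_inv τ := by simp

lemma gp_snoc (n : ℕ) (init : S → ℝ) (trans : S → A → S → ℝ)
    (P : Fin (n + 1) → S → A → ℝ) (τ : Traj S A n) (a : A) (s : S) :
    gp (n + 1) init trans P (snocT n ((τ, (a, s)))) =
      gp n init trans (fun k => P k.castSucc) τ *
        (P (Fin.last n) (τ.1 (Fin.last n)) a * trans (τ.1 (Fin.last n)) a s) := by
  obtain ⟨σ, α⟩ := τ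
  simp only [gp, snocT, Equiv.coe_fn_mk, Fin.prod_univ_castSucc]
  have h0 : (0 : Fin (n + 2)) = Fin.castSucc 0 := rfl
  have hlast : (Fin.last n).succ = Fin.last (n + 1) := rfl
  rw [h0, Fin.snoc_castSucc]
  have hfac : ∀ t : Fin n,
      (Fin.snoc (α := fun _ => S) σ s) ((t.castSucc).castSucc) = σ t.castSucc ∧
      (Fin.snoc (α := fun _ => A) α a) (t.castSucc) = α t ∧
      (Fin.snoc (α := fun _ => S) σ s) ((t.castSucc).succ) = σ t.succ := by
    intro t
    refine ⟨Fin.snoc_castSucc .., Fin.snoc_castSucc .., ?_⟩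
    rw [Fin.succ_castSucc, Fin.snoc_castSucc]
  simp only [fun t : Fin n => (hfac t).1, fun t : Fin n => (hfac t).2.1,
    fun t : Fin n => (hfac t).2.2]
  rw [Fin.snoc_last, hlast, Fin.snoc_last, Fin.snoc_castSucc]
  ring

lemma pref_snoc (n : ℕ) (τ : Traj S A n) (a : A) (s : S) :
    pref (Nat.le_succ n) (snocT n ((τ, (a, s)))) = τ := by
  obtain ⟨σ, α⟩ := τ
  simp only [pref, snocT, Equiv.coe_fn_mk]
  refine Prod.ext ?_ ?_
  · funext i
    exact Fin.snoc_castSucc (α := fun _ => S) ..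
  · funext j
    exact Fin.snoc_castSucc (α := fun _ => A) ..

lemma peel (n : ℕ) (init : S → ℝ) (trans : S → A → S → ℝ)
    (htrans1 : ∀ s a, ∑ s' : S, trans s a s' = 1)
    (P : Fin (n + 1) → S → A → ℝ) (f : Traj S A n → ℝ) :
    ∑ τ : Traj S A (n + 1), gp (n + 1) init trans P τ * f (pref (Nat.le_succ n) τ)
      = ∑ τ : Traj S A n, gp n init trans (fun k => P k.castSucc) τ * f τ
          * (∑ a : A, P (Fin.last n) (τ.1 (Fin.last n)) a) := by
  rw [← (snocT (S := S) (A := A) n).sum_comp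
    (fun τ => gp (n + 1) init trans P τ * f (pref (Nat.le_succ n) τ))]
  rw [Fintype.sum_prod_type]
  refine Finset.sum_congr rfl fun τ _ => ?_
  rw [Fintype.sum_prod_type]
  simp only [gp_snoc, pref_snoc]
  rw [Finset.mul_sum]
  refine Finset.sum_congr rfl fun a _ => ?_
  rw [← Finset.sum_mul, ← Finset.mul_sum, ← Finset.mul_sum, htrans1, mul_one]
  ring

set_option linter.unusedSectionVars false

lemma reduce (init : S → ℝ) (trans : S → A → S → ℝ)
    (htrans1 : ∀ s a, ∑ s' : S, trans s a s' = 1) (m : ℕ) :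
    ∀ n (h : m ≤ n) (P : Fin n → S → A → ℝ)
      (_ : ∀ k : Fin n, m ≤ (k : ℕ) → ∀ s, ∑ a : A, P k s a = 1)
      (f : Traj S A m → ℝ),
    ∑ τ : Traj S A n, gp n init trans P τ * f (pref h τ)
      = ∑ τ : Traj S A m, gp m init trans (fun k => P (Fin.castLE h k)) τ * f τ := by
  refine Nat.le_induction ?_ ?_
  · intro P hP f
    refine Finset.sum_congr rfl fun τ _ => ?_
    rfl
  · intro n hn IH P hP f
    have hcomp : ∀ τ : Traj S A (n + 1),
        pref (le_trans hn (Nat.le_succ n)) τ = pref hn (pref (Nat.le_succ n) τ) := by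
      intro τ; rfl
    simp only [hcomp]
    rw [peel n init trans htrans1 P (fun τ => f (pref hn τ))]
    have hone : ∀ τ : Traj S A n,
        (∑ a : A, P (Fin.last n) (τ.1 (Fin.last n)) a) = 1 := by
      intro τ
      exact hP (Fin.last n) (by simpa using hn) _
    calc ∑ τ : Traj S A n, gp n init trans (fun k => P k.castSucc) τ * f (pref hn τ)
          * (∑ a : A, P (Fin.last n) (τ.1 (Fin.last n)) a)
        = ∑ τ : Traj S A n, gp n init trans (fun k => P k.castSucc) τ * f (pref hn τ) := by
          refine Finset.sum_congr rfl fun τ _ => ?_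
          rw [hone, mul_one]
      _ = ∑ τ : Traj S A m,
            gp m init trans (fun k => (fun k' : Fin n => P k'.castSucc) (Fin.castLE hn k)) τ
              * f τ := by
          refine IH (fun k => P k.castSucc) (fun k hk s => hP k.castSucc (by simpa using hk) s) f
      _ = ∑ τ : Traj S A m, gp m init trans
            (fun k => P (Fin.castLE (le_trans hn (Nat.le_succ n)) k)) τ * f τ := by
          rfl

lemma kill (init : S → ℝ) (trans : S → A → S → ℝ)
    (htrans1 : ∀ s a, ∑ s' : S, trans s a s' = 1) {n : ℕ}
    (P : Fin n → S → A → ℝ) (t : Fin n)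
    (h0 : ∀ s, ∑ a : A, P t s a = 0)
    (hP : ∀ k : Fin n, (t : ℕ) < (k : ℕ) → ∀ s, ∑ a : A, P k s a = 1)
    (f : Traj S A (t : ℕ) → ℝ) (h : (t : ℕ) ≤ n) :
    ∑ τ : Traj S A n, gp n init trans P τ * f (pref h τ) = 0 := by
  have ht1 : (t : ℕ) + 1 ≤ n := t.isLt
  have hcomp : ∀ τ : Traj S A n,
      pref h τ = pref (Nat.le_succ (t : ℕ)) (pref ht1 τ) := fun τ => rfl
  simp only [hcomp]
  rw [reduce init trans htrans1 ((t : ℕ) + 1) n ht1 P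
    (fun k hk s => hP k (by omega) s) (fun τ' => f (pref (Nat.le_succ (t : ℕ)) τ'))]
  rw [peel (t : ℕ) init trans htrans1 (fun k => P (Fin.castLE ht1 k)) f]
  refine Finset.sum_eq_zero fun τ _ => ?_
  exact mul_eq_zero_of_right _ (h0 (τ.1 (Fin.last (t : ℕ))))

lemma group {n : ℕ} [DecidableEq S] [DecidableEq A] (t : Fin n) (F : Traj S A n → ℝ) :
    ∑ τ : Traj S A n, F τ = ∑ s : S, ∑ a : A, ∑ τ : Traj S A n,
      if τ.1 t.castSucc = s ∧ τ.2 t = a then F τ else 0 := by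
  calc ∑ τ : Traj S A n, F τ
      = ∑ τ : Traj S A n, ∑ s : S, ∑ a : A,
          (if τ.1 t.castSucc = s ∧ τ.2 t = a then F τ else 0) := by
        refine Finset.sum_congr rfl fun τ _ => ?_
        simp [ite_and]
    _ = ∑ s : S, ∑ τ : Traj S A n, ∑ a : A,
          (if τ.1 t.castSucc = s ∧ τ.2 t = a then F τ else 0) := Finset.sum_comm
    _ = ∑ s : S, ∑ a : A, ∑ τ : Traj S A n,
          (if τ.1 t.castSucc = s ∧ τ.2 t = a then F τ else 0) :=
        Finset.sum_congr rfl fun s _ => Finset.sum_comm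

lemma gp_update {n : ℕ} [DecidableEq S] [DecidableEq A]
    (init : S → ℝ) (trans : S → A → S → ℝ)
    (P : Fin n → S → A → ℝ) (t : Fin n) (q : S → A → ℝ) (τ : Traj S A n)
    (hpos : P t (τ.1 t.castSucc) (τ.2 t) ≠ 0) :
    gp n init trans (Function.update P t q) τ
      = gp n init trans P τ *
          (q (τ.1 t.castSucc) (τ.2 t) / P t (τ.1 t.castSucc) (τ.2 t)) := by
  unfold gp
  have hG : (fun k : Fin n => (Function.update P t q) k (τ.1 k.castSucc) (τ.2 k)
        * trans (τ.1 k.castSucc) (τ.2 k) (τ.1 k.succ))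
      = Function.update (fun k : Fin n => P k (τ.1 k.castSucc) (τ.2 k)
        * trans (τ.1 k.castSucc) (τ.2 k) (τ.1 k.succ)) t
        (q (τ.1 t.castSucc) (τ.2 t) * trans (τ.1 t.castSucc) (τ.2 t) (τ.1 t.succ)) := by
    funext k
    by_cases hk : k = t
    · subst hk; rw [Function.update_self, Function.update_self]
    · rw [Function.update_of_ne hk, Function.update_of_ne hk]
  rw [hG, Finset.prod_update_of_mem (Finset.mem_univ t),
    ← Finset.prod_erase_mul _ _ (Finset.mem_univ t), Finset.erase_eq]
  field_simp

lemma gp_pos {n : ℕ} (init : S → ℝ) (trans : S → A → S → ℝ)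
    (P : Fin n → S → A → ℝ) (τ : Traj S A n)
    (hinit : ∀ s, 0 < init s) (htrans : ∀ s a s', 0 < trans s a s')
    (hP : ∀ k s a, 0 < P k s a) : 0 < gp n init trans P τ := by
  refine mul_pos (hinit _) (Finset.prod_pos fun k _ => mul_pos (hP ..) (htrans ..))

lemma hasDerivAt_gp_kernel {n : ℕ} [DecidableEq S] [DecidableEq A] {G : Type}
    (init : S → ℝ) (trans : S → A → S → ℝ) (pol : ℝ → G → S → A → ℝ)
    (hpold : ∀ (g : G) (s : S) (a : A), Differentiable ℝ fun θ' => pol θ' g s a)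
    (θ : ℝ) (g : G) (τ : Traj S A n) :
    HasDerivAt (fun θ' => gp n init trans (fun _ => pol θ' g) τ)
      (∑ t : Fin n, gp n init trans
        (Function.update (fun _ : Fin n => pol θ g) t
          (fun s a => deriv (fun θ'' => pol θ'' g s a) θ)) τ) θ := by
  have hfac : ∀ t : Fin n, HasDerivAt
      (fun θ' => pol θ' g (τ.1 t.castSucc) (τ.2 t) * trans (τ.1 t.castSucc) (τ.2 t) (τ.1 t.succ))
      (deriv (fun θ'' => pol θ'' g (τ.1 t.castSucc) (τ.2 t)) θ
        * trans (τ.1 t.castSucc) (τ.2 t) (τ.1 t.succ)) θ := by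
    intro t
    exact ((hpold g _ _ θ).hasDerivAt).mul_const _
  have hprod := HasDerivAt.fun_finsetProd (u := Finset.univ) (hf := fun t _ => hfac t)
  have h2 := hprod.const_mul (init (τ.1 0))
  refine h2.congr_deriv ?_
  rw [Finset.mul_sum]
  refine Finset.sum_congr rfl fun t _ => ?_
  unfold gp
  have hG : (fun k : Fin n =>
          (Function.update (fun _ : Fin n => pol θ g) t
            (fun s a => deriv (fun θ'' => pol θ'' g s a) θ)) k (τ.1 k.castSucc) (τ.2 k)
          * trans (τ.1 k.castSucc) (τ.2 k) (τ.1 k.succ))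
        = Function.update (fun k : Fin n => pol θ g (τ.1 k.castSucc) (τ.2 k)
            * trans (τ.1 k.castSucc) (τ.2 k) (τ.1 k.succ)) t
          (deriv (fun θ'' => pol θ'' g (τ.1 t.castSucc) (τ.2 t)) θ
            * trans (τ.1 t.castSucc) (τ.2 t) (τ.1 t.succ)) := by
      funext k
      by_cases hk : k = t
      · subst hk; rw [Function.update_self, Function.update_self]
      · rw [Function.update_of_ne hk, Function.update_of_ne hk]
  rw [hG, Finset.prod_update_of_mem (Finset.mem_univ t)]
  rw [smul_eq_mul, Finset.erase_eq]
  ring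

lemma sum_deriv_pol {G : Type} (pol : ℝ → G → S → A → ℝ)
    (hpold : ∀ (g : G) (s : S) (a : A), Differentiable ℝ fun θ' => pol θ' g s a)
    (hpol1 : ∀ (θ' : ℝ) (g : G) (s : S), ∑ a : A, pol θ' g s a = 1)
    (θ : ℝ) (g : G) (s : S) :
    ∑ a : A, deriv (fun θ'' => pol θ'' g s a) θ = 0 := by
  have h1 : HasDerivAt (fun θ' => ∑ a : A, pol θ' g s a)
      (∑ a : A, deriv (fun θ'' => pol θ'' g s a) θ) θ :=
    HasDerivAt.fun_sum fun a _ => (hpold g s a θ).hasDerivAt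
  have h2 : (fun θ' => ∑ a : A, pol θ' g s a) = fun _ => (1 : ℝ) := by
    funext θ'; exact hpol1 θ' g s
  rw [h2] at h1
  have h3 := (hasDerivAt_const θ (1 : ℝ))
  exact (HasDerivAt.unique h1 h3)

lemma trajProb_eq_gp {G : Type} (n : ℕ) (init : S → ℝ) (trans : S → A → S → ℝ)
    (pol : ℝ → G → S → A → ℝ) (θ : ℝ) (g : G) (τ : Traj S A n) :
    trajProb n init trans pol θ g τ = gp n init trans (fun _ => pol θ g) τ := rfl

section Core

variable {G : Type} [Fintype G] [DecidableEq S] [DecidableEq A]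
variable (n : ℕ) (init : S → ℝ) (trans : S → A → S → ℝ) (pol : ℝ → G → S → A → ℝ)
variable (r : S → G → ℝ)

lemma den_pos (hinit : ∀ s, 0 < init s) (htrans : ∀ s a s', 0 < trans s a s')
    (hpol : ∀ (θ' : ℝ) (g : G) (s : S) (a : A), 0 < pol θ' g s a)
    (θ : ℝ) (g : G) (t : Fin n) (s : S) (a : A) :
    0 < ∑ τ : Traj S A n,
      if τ.1 t.castSucc = s ∧ τ.2 t = a then trajProb n init trans pol θ g τ else 0 := by
  refine Finset.sum_pos' (fun τ _ => ?_) ⟨((fun _ => s, fun _ => a) : Traj S A n),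
    Finset.mem_univ _, ?_⟩
  · by_cases hc : τ.1 t.castSucc = s ∧ τ.2 t = a
    · rw [if_pos hc]
      exact le_of_lt (by rw [trajProb_eq_gp]
                         exact gp_pos _ _ _ _ hinit htrans (fun k s' a' => hpol θ g s' a'))
    · rw [if_neg hc]
  · rw [if_pos ⟨rfl, rfl⟩, trajProb_eq_gp]
    exact gp_pos _ _ _ _ hinit htrans (fun k s' a' => hpol θ g s' a')

lemma core (hinit : ∀ s, 0 < init s)
    (htrans : ∀ s a s', 0 < trans s a s') (htrans1 : ∀ s a, ∑ s' : S, trans s a s' = 1)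
    (hpol : ∀ (θ' : ℝ) (g : G) (s : S) (a : A), 0 < pol θ' g s a)
    (hpold : ∀ (g : G) (s : S) (a : A), Differentiable ℝ fun θ' => pol θ' g s a)
    (hpol1 : ∀ (θ' : ℝ) (g : G) (s : S), ∑ a : A, pol θ' g s a = 1)
    (θ : ℝ) (g g' : G) (t : Fin n) :
    ∑ τ : Traj S A n,
      gp n init trans (Function.update (fun _ : Fin n => pol θ g) t
          (fun s a => deriv (fun θ'' => pol θ'' g s a) θ)) τ
        * (∑ t' : Fin (n + 1), r (τ.1 t') g)
    = ∑ τ : Traj S A n,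
        gp n init trans (Function.update
            (fun k : Fin n => if k ≤ t then pol θ g else pol θ g') t
            (fun s a => deriv (fun θ'' => pol θ'' g s a) θ)) τ
          * (condQ n init trans pol r θ g t (τ.1 t.castSucc) (τ.2 t)
              - ∑ a : A, pol θ g (τ.1 t.castSucc) a
                  * condQ n init trans pol r θ g t (τ.1 t.castSucc) a) := by
  set pol' : S → A → ℝ := fun s a => deriv (fun θ'' => pol θ'' g s a) θ with hpol'
  set D : Fin n → S → A → ℝ := Function.update (fun _ : Fin n => pol θ g) t pol' with hD
  set MD : Fin n → S → A → ℝ := Function.update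
      (fun k : Fin n => if k ≤ t then pol θ g else pol θ g') t pol' with hMD
  set Q : S → A → ℝ := fun s a => condQ n init trans pol r θ g t s a with hQ
  have hle : (t : ℕ) ≤ n := le_of_lt t.isLt
  have ht1 : (t : ℕ) + 1 ≤ n := t.isLt
  -- kill hypotheses for D
  have hD0 : ∀ s, ∑ a : A, D t s a = 0 := by
    intro s
    rw [hD]
    simp only [Function.update_self]
    exact sum_deriv_pol pol hpold hpol1 θ g s
  have hDgt : ∀ k : Fin n, (t : ℕ) < (k : ℕ) → ∀ s, ∑ a : A, D k s a = 1 := by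
    intro k hk s
    rw [hD, Function.update_of_ne (by exact fun h => by subst h; omega)]
    exact hpol1 θ g s
  -- step A : drop past rewards
  have stepA : ∑ τ : Traj S A n, gp n init trans D τ * (∑ t' : Fin (n + 1), r (τ.1 t') g)
      = ∑ τ : Traj S A n, gp n init trans D τ *
          (∑ t' : Fin (n + 1), if t.castSucc < t' then r (τ.1 t') g else 0) := by
    have hsplit : ∀ τ : Traj S A n, (∑ t' : Fin (n + 1), r (τ.1 t') g)
        = (∑ t' : Fin (n + 1), if t.castSucc < t' then r (τ.1 t') g else 0)
          + (∑ t' : Fin (n + 1), if t.castSucc < t' then 0 else r (τ.1 t') g) := by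
      intro τ
      rw [← Finset.sum_add_distrib]
      refine Finset.sum_congr rfl fun t' _ => ?_
      by_cases hc : t.castSucc < t' <;> simp [hc]
    simp only [hsplit, mul_add, Finset.sum_add_distrib]
    have hpast : ∑ τ : Traj S A n, gp n init trans D τ *
        (∑ t' : Fin (n + 1), if t.castSucc < t' then 0 else r (τ.1 t') g) = 0 := by
      have := kill init trans htrans1 D t hD0 hDgt
        (fun τ₀ => ∑ t' : Fin (n + 1), if hc : t.castSucc < t' then 0
          else r (τ₀.1 ⟨t'.1, by simp [Fin.lt_def] at hc; omega⟩) g) hle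
      exact Eq.trans (Finset.sum_congr rfl fun τ _ => rfl) this
    rw [hpast, add_zero]
  rw [stepA]
  -- the grouping machine
  have hgen : ∀ X : Traj S A n → ℝ,
      ∑ τ : Traj S A n, gp n init trans D τ * X τ
        = ∑ s : S, ∑ a : A, (pol' s a / pol θ g s a) *
            ∑ τ : Traj S A n, (if τ.1 t.castSucc = s ∧ τ.2 t = a
              then trajProb n init trans pol θ g τ * X τ else 0) := by
    intro X
    rw [group t (fun τ => gp n init trans D τ * X τ)]
    refine Finset.sum_congr rfl fun s _ => Finset.sum_congr rfl fun a _ => ?_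
    rw [Finset.mul_sum]
    refine Finset.sum_congr rfl fun τ _ => ?_
    by_cases hc : τ.1 t.castSucc = s ∧ τ.2 t = a
    · rw [if_pos hc, if_pos hc, hD,
        gp_update init trans _ t pol' τ (ne_of_gt (hpol θ g _ _))]
      obtain ⟨h1, h2⟩ := hc
      rw [h1, h2, trajProb_eq_gp]
      ring
    · rw [if_neg hc, if_neg hc, mul_zero]
  -- step B : future rewards to Q
  have stepB : ∑ τ : Traj S A n, gp n init trans D τ *
        (∑ t' : Fin (n + 1), if t.castSucc < t' then r (τ.1 t') g else 0)
      = ∑ τ : Traj S A n, gp n init trans D τ * Q (τ.1 t.castSucc) (τ.2 t) := by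
    rw [hgen (fun τ => ∑ t' : Fin (n + 1), if t.castSucc < t' then r (τ.1 t') g else 0),
      hgen (fun τ => Q (τ.1 t.castSucc) (τ.2 t))]
    refine Finset.sum_congr rfl fun s _ => Finset.sum_congr rfl fun a _ => ?_
    congr 1
    have hden := den_pos n init trans pol hinit htrans hpol θ g t s a
    have hQval : Q s a * (∑ τ : Traj S A n,
        if τ.1 t.castSucc = s ∧ τ.2 t = a then trajProb n init trans pol θ g τ else 0)
        = ∑ τ : Traj S A n, if τ.1 t.castSucc = s ∧ τ.2 t = a
            then trajProb n init trans pol θ g τ *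
              ∑ t' ∈ Finset.univ.filter (fun t' : Fin (n + 1) => t.castSucc < t'), r (τ.1 t') g
            else 0 := by
      rw [hQ]
      simp only [condQ]
      rw [div_mul_cancel₀ _ (ne_of_gt hden)]
    calc ∑ τ : Traj S A n, (if τ.1 t.castSucc = s ∧ τ.2 t = a
            then trajProb n init trans pol θ g τ *
              (∑ t' : Fin (n + 1), if t.castSucc < t' then r (τ.1 t') g else 0) else 0)
        = ∑ τ : Traj S A n, (if τ.1 t.castSucc = s ∧ τ.2 t = a
            then trajProb n init trans pol θ g τ *
              ∑ t' ∈ Finset.univ.filter (fun t' : Fin (n + 1) => t.castSucc < t'), r (τ.1 t') g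
            else 0) := by
          refine Finset.sum_congr rfl fun τ _ => ?_
          rw [Finset.sum_filter]
      _ = Q s a * (∑ τ : Traj S A n,
            if τ.1 t.castSucc = s ∧ τ.2 t = a then trajProb n init trans pol θ g τ else 0) :=
          hQval.symm
      _ = ∑ τ : Traj S A n, (if τ.1 t.castSucc = s ∧ τ.2 t = a
            then trajProb n init trans pol θ g τ * Q (τ.1 t.castSucc) (τ.2 t) else 0) := by
          rw [Finset.mul_sum]
          refine Finset.sum_congr rfl fun τ _ => ?_
          by_cases hc : τ.1 t.castSucc = s ∧ τ.2 t = a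
          · rw [if_pos hc, if_pos hc, hc.1, hc.2]; ring
          · rw [if_neg hc, if_neg hc, mul_zero]
  rw [stepB]
  -- step C : baseline is zero
  have stepC : ∑ τ : Traj S A n, gp n init trans D τ *
      (∑ a : A, pol θ g (τ.1 t.castSucc) a * Q (τ.1 t.castSucc) a) = 0 := by
    have := kill init trans htrans1 D t hD0 hDgt
      (fun τ₀ => ∑ a : A, pol θ g (τ₀.1 (Fin.last (t : ℕ))) a * Q (τ₀.1 (Fin.last (t : ℕ))) a)
      hle
    exact Eq.trans (Finset.sum_congr rfl fun τ _ => rfl) this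
  -- step D : change of measure
  have hadv : ∀ P' : Fin n → S → A → ℝ,
      (∀ k : Fin n, (t : ℕ) < (k : ℕ) → ∀ s, ∑ a : A, P' k s a = 1) →
      ∑ τ : Traj S A n, gp n init trans P' τ *
          (Q (τ.1 t.castSucc) (τ.2 t) - ∑ a : A, pol θ g (τ.1 t.castSucc) a * Q (τ.1 t.castSucc) a)
        = ∑ τ₀ : Traj S A ((t : ℕ) + 1),
            gp ((t : ℕ) + 1) init trans (fun k => P' (Fin.castLE ht1 k)) τ₀ *
              (Q (τ₀.1 ⟨(t : ℕ), by omega⟩) (τ₀.2 ⟨(t : ℕ), by omega⟩)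
                - ∑ a : A, pol θ g (τ₀.1 ⟨(t : ℕ), by omega⟩) a
                    * Q (τ₀.1 ⟨(t : ℕ), by omega⟩) a) := by
    intro P' hP'
    exact reduce init trans htrans1 ((t : ℕ) + 1) n ht1 P' (fun k hk s => hP' k (by omega) s)
      (fun τ₀ => Q (τ₀.1 ⟨(t : ℕ), by omega⟩) (τ₀.2 ⟨(t : ℕ), by omega⟩)
        - ∑ a : A, pol θ g (τ₀.1 ⟨(t : ℕ), by omega⟩) a * Q (τ₀.1 ⟨(t : ℕ), by omega⟩) a)
  have hMDgt : ∀ k : Fin n, (t : ℕ) < (k : ℕ) → ∀ s, ∑ a : A, MD k s a = 1 := by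
    intro k hk s
    rw [hMD, Function.update_of_ne (by exact fun h => by subst h; omega)]
    rw [if_neg (by exact fun h => by rw [Fin.le_def] at h; omega)]
    exact hpol1 θ g' s
  have hkernel : (fun k => D (Fin.castLE ht1 k)) = (fun k => MD (Fin.castLE ht1 k)) := by
    funext k
    by_cases hk : Fin.castLE ht1 k = t
    · rw [hk, hD, hMD, Function.update_self, Function.update_self]
    · rw [hD, hMD, Function.update_of_ne hk, Function.update_of_ne hk]
      rw [if_pos (by rw [Fin.le_def]; have := k.isLt; by_contra hcon
                     exact hk (Fin.ext (by simp at hcon ⊢; omega)))]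
  have stepD : ∑ τ : Traj S A n, gp n init trans D τ *
        (Q (τ.1 t.castSucc) (τ.2 t)
          - ∑ a : A, pol θ g (τ.1 t.castSucc) a * Q (τ.1 t.castSucc) a)
      = ∑ τ : Traj S A n, gp n init trans MD τ *
        (Q (τ.1 t.castSucc) (τ.2 t)
          - ∑ a : A, pol θ g (τ.1 t.castSucc) a * Q (τ.1 t.castSucc) a) := by
    rw [hadv D hDgt, hadv MD hMDgt, hkernel]
  calc ∑ τ : Traj S A n, gp n init trans D τ * Q (τ.1 t.castSucc) (τ.2 t)
      = ∑ τ : Traj S A n, gp n init trans D τ *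
          (Q (τ.1 t.castSucc) (τ.2 t)
            - ∑ a : A, pol θ g (τ.1 t.castSucc) a * Q (τ.1 t.castSucc) a) := by
        simp only [mul_sub, Finset.sum_sub_distrib]
        rw [stepC, sub_zero]
    _ = ∑ τ : Traj S A n, gp n init trans MD τ *
          (Q (τ.1 t.castSucc) (τ.2 t)
            - ∑ a : A, pol θ g (τ.1 t.castSucc) a * Q (τ.1 t.castSucc) a) := stepD

end Core

lemma gp_mix {G : Type} (n : ℕ) (init : S → ℝ) (trans : S → A → S → ℝ)
    (pol : ℝ → G → S → A → ℝ) (θ : ℝ) (g g' : G) (t : Fin n) (τ : Traj S A n)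
    (hpos : ∀ s a, 0 < pol θ g' s a) :
    trajProb n init trans pol θ g' τ *
      (∏ k : Fin n, if k ≤ t then
          pol θ g (τ.1 k.castSucc) (τ.2 k) / pol θ g' (τ.1 k.castSucc) (τ.2 k) else 1)
    = gp n init trans (fun k : Fin n => if k ≤ t then pol θ g else pol θ g') τ := by
  rw [trajProb_eq_gp]
  unfold gp
  rw [mul_assoc, ← Finset.prod_mul_distrib]
  congr 1
  refine Finset.prod_congr rfl fun k _ => ?_
  have h0 := ne_of_gt (hpos (τ.1 k.castSucc) (τ.2 k))
  by_cases hk : k ≤ t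
  · simp only [hk, if_true, if_pos hk]
    field_simp
  · simp only [hk, if_false, if_neg hk, mul_one]

end HPG

/-- the advantage formulation of the hindsight policy gradient. For any
fixed goal `g'`, `∇η(θ) = ∑_τ p(τ∣g',θ) ∑_g p(g) ∑_{t=1}^{T-1} ∇ log p(a_t∣s_t,g,θ)
[∏_{k=1}^{t} p(a_k∣s_k,g,θ)/p(a_k∣s_k,g',θ)] A_t^θ(s_t, a_t, g)`, where
`A_t^θ = Q_t^θ − V_t^θ` and `V_t^θ(s,g) = ∑_a p(a∣s,g,θ) Q_t^θ(s,a,g)`. -/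
theorem hindsight_policy_gradient_advantage {S A G : Type}
    [Fintype S] [Fintype A] [Fintype G] [DecidableEq S] [DecidableEq A]
    (n : ℕ) (init : S → ℝ) (trans : S → A → S → ℝ) (pol : ℝ → G → S → A → ℝ)
    (pG : G → ℝ) (r : S → G → ℝ)
    (hinit : ∀ s, 0 < init s) (hinit1 : ∑ s : S, init s = 1)
    (htrans : ∀ s a s', 0 < trans s a s') (htrans1 : ∀ s a, ∑ s' : S, trans s a s' = 1)
    (hpol : ∀ (θ' : ℝ) (g : G) (s : S) (a : A), 0 < pol θ' g s a)
    (hpold : ∀ (g : G) (s : S) (a : A), Differentiable ℝ fun θ' => pol θ' g s a)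
    (hpol1 : ∀ (θ' : ℝ) (g : G) (s : S), ∑ a : A, pol θ' g s a = 1)
    (hpG : ∀ g, 0 ≤ pG g) (hpG1 : ∑ g : G, pG g = 1)
    (θ : ℝ) (g' : G) :
    deriv (expReturn n init trans pol pG r) θ =
      ∑ τ : Traj S A n, trajProb n init trans pol θ g' τ *
        ∑ g : G, pG g * ∑ t : Fin n,
          deriv (fun θ'' => Real.log (pol θ'' g (τ.1 t.castSucc) (τ.2 t))) θ *
            ((∏ k : Fin n,
                if k ≤ t then
                  pol θ g (τ.1 k.castSucc) (τ.2 k) / pol θ g' (τ.1 k.castSucc) (τ.2 k)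
                else 1) *
              (condQ n init trans pol r θ g t (τ.1 t.castSucc) (τ.2 t) -
                ∑ a : A, pol θ g (τ.1 t.castSucc) a *
                  condQ n init trans pol r θ g t (τ.1 t.castSucc) a)) := by
  set Adv : G → Fin n → Traj S A n → ℝ := fun g t τ =>
    condQ n init trans pol r θ g t (τ.1 t.castSucc) (τ.2 t) -
      ∑ a : A, pol θ g (τ.1 t.castSucc) a *
        condQ n init trans pol r θ g t (τ.1 t.castSucc) a with hAdv
  set D : G → Fin n → Fin n → S → A → ℝ := fun g t =>
    Function.update (fun _ : Fin n => pol θ g) t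
      (fun s a => deriv (fun θ'' => pol θ'' g s a) θ) with hDdef
  set MD : G → Fin n → Fin n → S → A → ℝ := fun g t =>
    Function.update (fun k : Fin n => if k ≤ t then pol θ g else pol θ g') t
      (fun s a => deriv (fun θ'' => pol θ'' g s a) θ) with hMDdef
  -- derivative of the expected return
  have hder : HasDerivAt (expReturn n init trans pol pG r)
      (∑ g : G, pG g * ∑ τ : Traj S A n,
        (∑ t : Fin n, HPG.gp n init trans (D g t) τ) * ∑ t : Fin (n + 1), r (τ.1 t) g) θ := by
    exact HasDerivAt.fun_sum fun g _ =>
      (HasDerivAt.fun_sum fun τ _ =>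
        ((HPG.hasDerivAt_gp_kernel init trans pol hpold θ g τ).mul_const _)).const_mul (pG g)
  rw [hder.deriv]
  -- pointwise identity for the right-hand side
  have hpoint : ∀ (g : G) (t : Fin n) (τ : Traj S A n),
      trajProb n init trans pol θ g' τ *
        (deriv (fun θ'' => Real.log (pol θ'' g (τ.1 t.castSucc) (τ.2 t))) θ *
          ((∏ k : Fin n, if k ≤ t then
              pol θ g (τ.1 k.castSucc) (τ.2 k) / pol θ g' (τ.1 k.castSucc) (τ.2 k) else 1) *
            Adv g t τ))
      = HPG.gp n init trans (MD g t) τ * Adv g t τ := by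
    intro g t τ
    have hlog : deriv (fun θ'' => Real.log (pol θ'' g (τ.1 t.castSucc) (τ.2 t))) θ
        = deriv (fun θ'' => pol θ'' g (τ.1 t.castSucc) (τ.2 t)) θ
            / pol θ g (τ.1 t.castSucc) (τ.2 t) :=
      (((hpold g (τ.1 t.castSucc) (τ.2 t) θ).hasDerivAt).log
        (ne_of_gt (hpol θ g (τ.1 t.castSucc) (τ.2 t)))).deriv
    have hupd : HPG.gp n init trans (MD g t) τ
        = HPG.gp n init trans (fun k : Fin n => if k ≤ t then pol θ g else pol θ g') τ *
            ((fun s a => deriv (fun θ'' => pol θ'' g s a) θ) (τ.1 t.castSucc) (τ.2 t)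
              / (if t ≤ t then pol θ g else pol θ g') (τ.1 t.castSucc) (τ.2 t)) := by
      rw [hMDdef]
      exact HPG.gp_update init trans _ t _ τ
        (by rw [if_pos le_rfl]; exact ne_of_gt (hpol θ g _ _))
    rw [hlog, hupd, if_pos le_rfl,
      ← HPG.gp_mix n init trans pol θ g g' t τ (fun s a => hpol θ g' s a)]
    ring
  -- rearrange the right-hand side
  have hRHS : (∑ τ : Traj S A n, trajProb n init trans pol θ g' τ *
        ∑ g : G, pG g * ∑ t : Fin n,
          deriv (fun θ'' => Real.log (pol θ'' g (τ.1 t.castSucc) (τ.2 t))) θ *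
            ((∏ k : Fin n, if k ≤ t then
                pol θ g (τ.1 k.castSucc) (τ.2 k) / pol θ g' (τ.1 k.castSucc) (τ.2 k) else 1) *
              Adv g t τ))
      = ∑ g : G, pG g * ∑ t : Fin n, ∑ τ : Traj S A n,
          HPG.gp n init trans (MD g t) τ * Adv g t τ := by
    calc (∑ τ : Traj S A n, trajProb n init trans pol θ g' τ * ∑ g : G, pG g * ∑ t : Fin n,
            deriv (fun θ'' => Real.log (pol θ'' g (τ.1 t.castSucc) (τ.2 t))) θ *
              ((∏ k : Fin n, if k ≤ t then
                  pol θ g (τ.1 k.castSucc) (τ.2 k) / pol θ g' (τ.1 k.castSucc) (τ.2 k) else 1) *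
                Adv g t τ))
        = ∑ τ : Traj S A n, ∑ g : G, pG g * ∑ t : Fin n,
            HPG.gp n init trans (MD g t) τ * Adv g t τ := by
          refine Finset.sum_congr rfl fun τ _ => ?_
          rw [Finset.mul_sum]
          refine Finset.sum_congr rfl fun g _ => ?_
          rw [← mul_assoc, mul_comm (trajProb n init trans pol θ g' τ) (pG g), mul_assoc,
            Finset.mul_sum]
          congr 1
          refine Finset.sum_congr rfl fun t _ => hpoint g t τ
      _ = ∑ g : G, ∑ τ : Traj S A n, pG g * ∑ t : Fin n,
            HPG.gp n init trans (MD g t) τ * Adv g t τ := Finset.sum_comm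
      _ = ∑ g : G, pG g * ∑ t : Fin n, ∑ τ : Traj S A n,
            HPG.gp n init trans (MD g t) τ * Adv g t τ := by
          refine Finset.sum_congr rfl fun g _ => ?_
          rw [← Finset.mul_sum]
          congr 1
          exact Finset.sum_comm
  rw [hRHS]
  -- conclude with the core lemma, goal by goal in g and t
  refine Finset.sum_congr rfl fun g _ => ?_
  congr 1
  calc ∑ τ : Traj S A n, (∑ t : Fin n, HPG.gp n init trans (D g t) τ)
          * ∑ t : Fin (n + 1), r (τ.1 t) g
      = ∑ t : Fin n, ∑ τ : Traj S A n,
          HPG.gp n init trans (D g t) τ * ∑ t' : Fin (n + 1), r (τ.1 t') g := by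
        rw [Finset.sum_comm]
        refine Finset.sum_congr rfl fun τ _ => ?_
        rw [Finset.sum_mul]
    _ = ∑ t : Fin n, ∑ τ : Traj S A n, HPG.gp n init trans (MD g t) τ * Adv g t τ := by
        refine Finset.sum_congr rfl fun t _ => ?_
        exact HPG.core n init trans pol r hinit htrans htrans1 hpol hpold hpol1 θ g g' t
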